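/- Let (D_n) and (λ_n) be sequences of real numbers with 0 < D_n ≤ 1/4, D_n → 0, λ_n > 1, λ_n² − 1 → 0, and suppose λ_n² − 1 ≥ D_n for all n. Let ρ > 0 and suppose (B_n) is a sequence of positive reals with B_n ≥ ρ·((λ_n^{2D_n} + 3)/(λ_n^{2D_n} − 1))^{1/(2D_n)} for all n. Then 1/(B_n·(λ_n² − 1)) → 0 as n → ∞. -/

import Mathlib

open Filter Real

theorem stmt_17 (D lam B : ℕ → ℝ) (ρ : ℝ) (hρ : 0 < ρ)
    (hD0 : ∀ n, 0 < D n) (hD14 : ∀ n, D n ≤ 1 / 4)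
    (hDlim : Filter.Tendsto D Filter.atTop (nhds 0))
    (hlam : ∀ n, 1 < lam n)
    (hlamlim : Filter.Tendsto (fun n => lam n ^ 2 - 1) Filter.atTop (nhds 0))
    (hlamD : ∀ n, D n ≤ lam n ^ 2 - 1)
    (hB : ∀ n, ρ * ((lam n ^ (2 * D n) + 3) / (lam n ^ (2 * D n) - 1)) ^ (1 / (2 * D n)) ≤ B n)
    (hBpos : ∀ n, 0 < B n) :
    Filter.Tendsto (fun n => 1 / (B n * (lam n ^ 2 - 1))) Filter.atTop (nhds 0) := by
  have hεpos : ∀ n, 0 < lam n ^ 2 - 1 := fun n => by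
    have := hlam n; nlinarith
  -- the bound sequence
  have hg : Tendsto (fun n => ρ⁻¹ * (2 : ℝ) ^ (-(1 / D n))) atTop (nhds 0) := by
    have h1 : Tendsto (fun n => 1 / D n) atTop atTop := by
      have : Tendsto D atTop (nhdsWithin 0 (Set.Ioi 0)) :=
        tendsto_nhdsWithin_of_tendsto_nhds_of_eventually_within _ hDlim
          (Filter.Eventually.of_forall fun n => hD0 n)
      simpa [one_div, Pi.inv_def] using this.inv_tendsto_nhdsGT_zero
    have h2 : Tendsto (fun n => (2 : ℝ) ^ (-(1 / D n))) atTop (nhds 0) :=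
      (tendsto_rpow_atBot_of_base_gt_one 2 one_lt_two).comp (tendsto_neg_atTop_atBot.comp h1)
    simpa using h2.const_mul ρ⁻¹
  apply squeeze_zero' (Filter.Eventually.of_forall fun n => by
      have := hBpos n; have := hεpos n; positivity)
    ?_ hg
  -- eventually ε ≤ 1
  have hev : ∀ᶠ n in atTop, lam n ^ 2 - 1 ≤ 1 := by
    have := hlamlim.eventually (eventually_le_nhds (show (0:ℝ) < 1 by norm_num))
    exact this.mono fun n h => h
  filter_upwards [hev] with n hε1
  set d := D n with hd
  set ε := lam n ^ 2 - 1 with hedef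
  have hdpos := hD0 n
  have hεp := hεpos n
  have hL : (0:ℝ) < lam n := lt_trans one_pos (hlam n)
  -- lam n ^ (2 * d) = (lam n ^ 2) ^ d  (rpow)
  have hrw : lam n ^ (2 * d) = (lam n ^ 2 : ℝ) ^ d := by
    rw [Real.rpow_mul hL.le, Real.rpow_two]
  have ha1 : 1 < lam n ^ (2 * d) := by
    exact (Real.one_lt_rpow_iff_of_pos hL).mpr (Or.inl ⟨hlam n, by positivity⟩)
  -- Bernoulli: (1 + ε)^d ≤ 1 + d ε
  have hbern : lam n ^ (2 * d) - 1 ≤ d * ε := by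
    have := rpow_one_add_le_one_add_mul_self (s := ε) (by linarith) hdpos.le
      (by linarith [hD14 n])
    rw [show (1 + ε) = lam n ^ 2 by ring] at this
    rw [hrw]; linarith
  have hdε : 0 < d * ε := mul_pos hdpos hεp
  -- (a+3)/(a-1) ≥ 4/(ε²)
  have hratio : 4 / ε ^ 2 ≤ (lam n ^ (2 * d) + 3) / (lam n ^ (2 * d) - 1) := by
    have h1 : 4 / (ε ^ 2) ≤ 4 / (d * ε) := by
      apply div_le_div_of_nonneg_left (by norm_num) hdε
      nlinarith [hlamD n]
    have h2 : 4 / (d * ε) ≤ (lam n ^ (2 * d) + 3) / (lam n ^ (2 * d) - 1) := by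
      apply div_le_div₀ (by linarith) (by linarith) (by linarith) hbern
    linarith
  have hexp : (0:ℝ) < 1 / (2 * d) := by positivity
  -- lower bound on B n
  have hBlow : ρ * (2 : ℝ) ^ (1 / d) * ε⁻¹ ^ (1 / d) ≤ B n := by
    refine le_trans ?_ (hB n)
    rw [mul_assoc]
    apply mul_le_mul_of_nonneg_left ?_ hρ.le
    have h4 : (4 / ε ^ 2 : ℝ) ^ (1 / (2 * d)) ≤
        ((lam n ^ (2 * d) + 3) / (lam n ^ (2 * d) - 1)) ^ (1 / (2 * d)) :=
      Real.rpow_le_rpow (by positivity) hratio hexp.le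
    refine le_trans (le_of_eq ?_) h4
    have hsq : (4:ℝ) / ε ^ 2 = (2 * ε⁻¹) ^ (2:ℕ) := by
      field_simp; ring
    rw [hsq, ← Real.rpow_natCast (2 * ε⁻¹) 2, ← Real.rpow_mul (by positivity),
      show ((2:ℕ):ℝ) * (1 / (2 * d)) = 1 / d by push_cast; field_simp,
      Real.mul_rpow (by norm_num) (by positivity)]
  -- ε^{1 - 1/d} ≥ 1 and conclude  B n * ε ≥ ρ * 2^{1/d}
  have hεinv : 1 ≤ ε⁻¹ ^ (1 / d) * ε := by
    have h1 : (1:ℝ) ≤ ε⁻¹ := by simpa using one_div_le_one_div_of_le hεp hε1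
    have h2 : (1:ℝ) ≤ ε⁻¹ ^ (1 / d - 1) := Real.one_le_rpow h1 (by
      rw [le_sub_iff_add_le, zero_add, le_div_iff₀ hdpos, one_mul]
      linarith [hD14 n])
    have h3 : ε⁻¹ ^ (1 / d) = ε⁻¹ ^ (1 / d - 1) * ε⁻¹ := by
      rw [← Real.rpow_add_one (by positivity : ε⁻¹ ≠ 0)]; ring_nf
    rw [h3, mul_assoc, inv_mul_cancel₀ hεp.ne', mul_one]; exact h2
  have hkey : ρ * (2:ℝ) ^ (1 / d) ≤ B n * ε := by
    calc ρ * (2:ℝ) ^ (1 / d) = ρ * (2:ℝ) ^ (1 / d) * 1 := by ring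
    _ ≤ ρ * (2:ℝ) ^ (1 / d) * (ε⁻¹ ^ (1 / d) * ε) := by
        apply mul_le_mul_of_nonneg_left hεinv (by positivity)
    _ = (ρ * (2:ℝ) ^ (1 / d) * ε⁻¹ ^ (1 / d)) * ε := by ring
    _ ≤ B n * ε := mul_le_mul_of_nonneg_right hBlow hεp.le
  have hpos2 : (0:ℝ) < ρ * (2:ℝ) ^ (1 / d) := by positivity
  have := one_div_le_one_div_of_le hpos2 hkey
  refine le_trans this (le_of_eq ?_)
  rw [one_div, mul_inv, ← Real.rpow_neg (by norm_num)]
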